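/- Let k > 2 be a fixed integer. For all sufficiently large d, the equation x = f_d(x) on [0,1] has exactly three solutions 0 < γ_d < α_d < β_d < 1, where f_d = g_d ∘ g_d, g_d(x) = 1/(1 + (d−1)x^{k−1}), and α_d is the unique fixed point of g_d in (0,1). Moreover γ_d = g_d(β_d). -/

import Mathlib

open Finset Set

/-- `g_d(x) = 1/(1 + (d-1)x^(k-1))`. -/
noncomputable def gd (d k : ℕ) (x : ℝ) : ℝ := 1 / (1 + ((d : ℝ) - 1) * x ^ (k - 1))

/-- `f_d = g_d ∘ g_d`. -/
noncomputable def fd (d k : ℕ) (x : ℝ) : ℝ := gd d k (gd d k x)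

namespace ThreeSol

/-- auxiliary function whose unique root in `(α,1)` is `β` -/
noncomputable def psi (d k : ℕ) (y : ℝ) : ℝ :=
  ((d : ℝ) - 1) * ∑ j ∈ Finset.range (k - 2), (gd d k y) ^ (j + 1) * y ^ (k - 2 - j)

variable {d k : ℕ}

lemma c_pos (hd : 2 ≤ d) : (0 : ℝ) < (d : ℝ) - 1 := by
  have : (2 : ℝ) ≤ d := by exact_mod_cast hd
  linarith

lemma denom_pos (hd : 2 ≤ d) {x : ℝ} (hx : 0 ≤ x) :
    0 < 1 + ((d : ℝ) - 1) * x ^ (k - 1) := by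
  have h1 : 0 ≤ ((d : ℝ) - 1) * x ^ (k - 1) :=
    mul_nonneg (c_pos hd).le (pow_nonneg hx _)
  linarith

lemma gd_pos (hd : 2 ≤ d) {x : ℝ} (hx : 0 ≤ x) : 0 < gd d k x :=
  one_div_pos.mpr (denom_pos hd hx)

lemma gd_lt_one (hk : 2 < k) (hd : 2 ≤ d) {x : ℝ} (hx : 0 < x) : gd d k x < 1 := by
  have h1 : 0 < ((d : ℝ) - 1) * x ^ (k - 1) :=
    mul_pos (c_pos hd) (pow_pos hx _)
  have h2 : (1 : ℝ) < 1 + ((d : ℝ) - 1) * x ^ (k - 1) := by linarith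
  calc gd d k x = 1 / (1 + ((d : ℝ) - 1) * x ^ (k - 1)) := rfl
    _ < 1 / 1 := one_div_lt_one_div_of_lt one_pos h2
    _ = 1 := by norm_num

lemma gd_eq_iff (hd : 2 ≤ d) {x y : ℝ} (hx : 0 ≤ x) :
    gd d k x = y ↔ y * (1 + ((d : ℝ) - 1) * x ^ (k - 1)) = 1 := by
  rw [gd, div_eq_iff (denom_pos hd hx).ne']
  constructor <;> intro h <;> linarith

lemma gd_anti (hk : 2 < k) (hd : 2 ≤ d) {a b : ℝ} (ha : 0 ≤ a) (hab : a < b) :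
    gd d k b < gd d k a := by
  apply one_div_lt_one_div_of_lt (denom_pos hd ha)
  have : a ^ (k - 1) < b ^ (k - 1) := pow_lt_pow_left₀ hab ha (by omega)
  nlinarith [c_pos hd]

lemma pow_split (x : ℝ) {a b c : ℕ} (h : a + b = c) : x ^ a * x ^ b = x ^ c := by
  rw [← pow_add, h]

/-- The key algebraic identity. -/
lemma psi_mul_sub (hk : 2 < k) {x y : ℝ} (hgy : gd d k y = x) :
    psi d k y * (y - x) = ((d : ℝ) - 1) * (x * y * (y ^ (k - 2) - x ^ (k - 2))) := by
  have h1 : ∀ j ∈ Finset.range (k - 2),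
      (gd d k y) ^ (j + 1) * y ^ (k - 2 - j) = x * y * (x ^ j * y ^ (k - 2 - 1 - j)) := by
    intro j hj
    rw [Finset.mem_range] at hj
    rw [hgy, ← pow_split y (show (k - 2 - 1 - j) + 1 = k - 2 - j by omega), pow_succ x j]
    ring
  have h2 := geom_sum₂_mul x y (k - 2)
  rw [psi, Finset.sum_congr rfl h1, ← Finset.mul_sum]
  linear_combination (-((d : ℝ) - 1) * (x * y)) * h2

/-- `y` together with `x = g(y) < y` forms a 2-cycle iff `psi y = 1`. -/
lemma cycle_iff (hk : 2 < k) (hd : 2 ≤ d) {x y : ℝ} (hx : 0 < x) (hxy : x < y)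
    (hgy : gd d k y = x) : gd d k x = y ↔ psi d k y = 1 := by
  have hy : 0 < y := hx.trans hxy
  have hgyx : x * (1 + ((d : ℝ) - 1) * y ^ (k - 1)) = 1 := (gd_eq_iff hd hy.le).mp hgy
  rw [gd_eq_iff hd hx.le]
  have hxk : x ^ (k - 2) * x = x ^ (k - 1) := by rw [← pow_succ]; congr 1; omega
  have hyk : y ^ (k - 2) * y = y ^ (k - 1) := by rw [← pow_succ]; congr 1; omega
  have key : y * (1 + ((d : ℝ) - 1) * x ^ (k - 1)) - 1 = (y - x) * (1 - psi d k y) := by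
    have h := psi_mul_sub hk hgy
    linear_combination h + hgyx - ((d : ℝ) - 1) * y * hxk + ((d : ℝ) - 1) * x * hyk
  constructor
  · intro h
    have h0 : (y - x) * (1 - psi d k y) = 0 := by linarith
    rcases mul_eq_zero.mp h0 with h' | h'
    · exfalso; linarith
    · linarith
  · intro h
    rw [h] at key; linarith


lemma gd_mul_le (hd : 2 ≤ d) {y₁ y₂ : ℝ} (h1 : 0 < y₁) (h12 : y₁ ≤ y₂) :
    gd d k y₂ * y₁ ≤ gd d k y₁ * y₂ := by
  have h2 : 0 < y₂ := lt_of_lt_of_le h1 h12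
  have hD1 := denom_pos (k := k) hd h1.le
  have hD2 := denom_pos (k := k) hd h2.le
  rw [gd, gd, div_mul_eq_mul_div, one_mul, div_mul_eq_mul_div, one_mul,
    div_le_div_iff₀ hD2 hD1]
  have hp : y₁ ^ (k - 1) ≤ y₂ ^ (k - 1) := pow_le_pow_left₀ h1.le h12 _
  have hyp : y₁ * y₁ ^ (k - 1) ≤ y₂ * y₂ ^ (k - 1) :=
    mul_le_mul h12 hp (pow_nonneg h1.le _) h2.le
  nlinarith [c_pos hd]

lemma A_anti (hk : 2 < k) (hd : 2 ≤ d) {α y₁ y₂ : ℝ} (hα : 0 < α)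
    (hK : (k : ℝ) - 2 < ((d : ℝ) - 1) * α ^ (k - 1))
    (ha1 : α ≤ y₁) (h12 : y₁ < y₂) (h2 : y₂ ≤ 1) :
    gd d k y₂ * y₂ ^ (k - 2) < gd d k y₁ * y₁ ^ (k - 2) := by
  have hy1 : 0 < y₁ := hα.trans_le ha1
  have hy2 : 0 < y₂ := hy1.trans h12
  have hc := c_pos hd
  have e1 : α ^ (k - 2) * α = α ^ (k - 1) := by rw [← pow_succ]; congr 1; omega
  have e2 : α ^ (k - 2) ≤ y₁ ^ (k - 2) := pow_le_pow_left₀ hα.le ha1 _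
  have hαy2 : α < y₂ := lt_of_le_of_lt ha1 h12
  have key : ((k : ℝ) - 2) < ((d : ℝ) - 1) * y₁ ^ (k - 2) * y₂ := by
    nlinarith [mul_pos (mul_pos hc (pow_pos hα (k - 2))) (sub_pos.mpr hαy2),
      mul_nonneg (mul_nonneg hc.le hy2.le) (sub_nonneg.mpr e2)]
  have hgs := geom_sum₂_mul y₂ y₁ (k - 2)
  have hterm : ∀ i ∈ Finset.range (k - 2), y₂ ^ i * y₁ ^ (k - 2 - 1 - i) ≤ y₂ ^ (k - 3) := by
    intro i hi
    rw [Finset.mem_range] at hi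
    have h' : y₁ ^ (k - 2 - 1 - i) ≤ y₂ ^ (k - 2 - 1 - i) := pow_le_pow_left₀ hy1.le h12.le _
    calc y₂ ^ i * y₁ ^ (k - 2 - 1 - i) ≤ y₂ ^ i * y₂ ^ (k - 2 - 1 - i) :=
          mul_le_mul_of_nonneg_left h' (pow_nonneg hy2.le i)
      _ = y₂ ^ (k - 3) := pow_split y₂ (by omega)
  have hS : (∑ i ∈ Finset.range (k - 2), y₂ ^ i * y₁ ^ (k - 2 - 1 - i))
      ≤ ((k : ℝ) - 2) * y₂ ^ (k - 3) := by
    calc (∑ i ∈ Finset.range (k - 2), y₂ ^ i * y₁ ^ (k - 2 - 1 - i))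
        ≤ (Finset.range (k - 2)).card • y₂ ^ (k - 3) := Finset.sum_le_card_nsmul _ _ _ hterm
      _ = ((k : ℝ) - 2) * y₂ ^ (k - 3) := by
          rw [Finset.card_range, nsmul_eq_mul, Nat.cast_sub (by omega : 2 ≤ k)]
          norm_num
  have hB : y₂ ^ (k - 2) - y₁ ^ (k - 2) ≤ ((k : ℝ) - 2) * y₂ ^ (k - 3) * (y₂ - y₁) := by
    rw [← hgs]
    exact mul_le_mul_of_nonneg_right hS (by linarith)
  have e3 : y₂ * y₂ ^ (k - 3) = y₂ ^ (k - 2) := by rw [← pow_succ']; congr 1; omega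
  have hC : ((k : ℝ) - 2) * y₂ ^ (k - 3) * (y₂ - y₁)
      < ((d : ℝ) - 1) * y₁ ^ (k - 2) * y₂ ^ (k - 2) * (y₂ - y₁) := by
    apply mul_lt_mul_of_pos_right _ (sub_pos.mpr h12)
    calc ((k : ℝ) - 2) * y₂ ^ (k - 3)
        < (((d : ℝ) - 1) * y₁ ^ (k - 2) * y₂) * y₂ ^ (k - 3) :=
          mul_lt_mul_of_pos_right key (pow_pos hy2 _)
      _ = ((d : ℝ) - 1) * y₁ ^ (k - 2) * y₂ ^ (k - 2) := by rw [← e3]; ring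
  have hD1 : 0 < 1 + ((d : ℝ) - 1) * y₁ ^ (k - 1) := denom_pos hd hy1.le
  have hD2 : 0 < 1 + ((d : ℝ) - 1) * y₂ ^ (k - 1) := denom_pos hd hy2.le
  have f1 : y₁ ^ (k - 2) * y₁ = y₁ ^ (k - 1) := by rw [← pow_succ]; congr 1; omega
  have f2 : y₂ ^ (k - 2) * y₂ = y₂ ^ (k - 1) := by rw [← pow_succ]; congr 1; omega
  rw [gd, gd, div_mul_eq_mul_div, one_mul, div_mul_eq_mul_div, one_mul,
    div_lt_div_iff₀ hD2 hD1]
  have hid : y₁ ^ (k - 2) * (1 + ((d : ℝ) - 1) * y₂ ^ (k - 1))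
      - y₂ ^ (k - 2) * (1 + ((d : ℝ) - 1) * y₁ ^ (k - 1))
      = ((d : ℝ) - 1) * y₁ ^ (k - 2) * y₂ ^ (k - 2) * (y₂ - y₁)
        - (y₂ ^ (k - 2) - y₁ ^ (k - 2)) := by
    linear_combination ((d : ℝ) - 1) * y₂ ^ (k - 2) * f1 - ((d : ℝ) - 1) * y₁ ^ (k - 2) * f2
  linarith [hB, hC, hid]

lemma term_anti (hk : 2 < k) (hd : 2 ≤ d) {α y₁ y₂ : ℝ} (hα : 0 < α)
    (hK : (k : ℝ) - 2 < ((d : ℝ) - 1) * α ^ (k - 1))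
    (ha1 : α ≤ y₁) (h12 : y₁ < y₂) (h2 : y₂ ≤ 1) {j : ℕ} (hj : j < k - 2) :
    gd d k y₂ ^ (j + 1) * y₂ ^ (k - 2 - j) < gd d k y₁ ^ (j + 1) * y₁ ^ (k - 2 - j) := by
  have hy1 : 0 < y₁ := hα.trans_le ha1
  have hy2 : 0 < y₂ := hy1.trans h12
  have hg1 : 0 < gd d k y₁ := gd_pos hd hy1.le
  have hg2 : 0 < gd d k y₂ := gd_pos hd hy2.le
  have hr : (gd d k y₂ * y₁) ^ j ≤ (gd d k y₁ * y₂) ^ j :=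
    pow_le_pow_left₀ (mul_nonneg hg2.le hy1.le) (gd_mul_le hd hy1 h12.le) j
  have hA := A_anti hk hd hα hK ha1 h12 h2
  have hmul : (gd d k y₂ * y₁) ^ j * (gd d k y₂ * y₂ ^ (k - 2))
      < (gd d k y₁ * y₂) ^ j * (gd d k y₁ * y₁ ^ (k - 2)) :=
    mul_lt_mul' hr hA (mul_nonneg hg2.le (pow_nonneg hy2.le _))
      (pow_pos (mul_pos hg1 hy2) j)
  have hP : 0 < y₁ ^ j * y₂ ^ j := mul_pos (pow_pos hy1 j) (pow_pos hy2 j)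
  have q1 : y₁ ^ (k - 2 - j) * y₁ ^ j = y₁ ^ (k - 2) := pow_split y₁ (by omega)
  have q2 : y₂ ^ (k - 2 - j) * y₂ ^ j = y₂ ^ (k - 2) := pow_split y₂ (by omega)
  have h2' : gd d k y₂ ^ (j + 1) * y₂ ^ (k - 2 - j) * (y₁ ^ j * y₂ ^ j)
      < gd d k y₁ ^ (j + 1) * y₁ ^ (k - 2 - j) * (y₁ ^ j * y₂ ^ j) := by
    calc gd d k y₂ ^ (j + 1) * y₂ ^ (k - 2 - j) * (y₁ ^ j * y₂ ^ j)
        = (gd d k y₂ * y₁) ^ j * (gd d k y₂ * y₂ ^ (k - 2)) := by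
          rw [mul_pow, ← q2, pow_succ]; ring
      _ < (gd d k y₁ * y₂) ^ j * (gd d k y₁ * y₁ ^ (k - 2)) := hmul
      _ = gd d k y₁ ^ (j + 1) * y₁ ^ (k - 2 - j) * (y₁ ^ j * y₂ ^ j) := by
          rw [mul_pow, ← q1, pow_succ]; ring
  exact (mul_lt_mul_iff_left₀ hP).mp h2'

lemma psi_anti (hk : 2 < k) (hd : 2 ≤ d) {α y₁ y₂ : ℝ} (hα : 0 < α)
    (hK : (k : ℝ) - 2 < ((d : ℝ) - 1) * α ^ (k - 1))
    (ha1 : α ≤ y₁) (h12 : y₁ < y₂) (h2 : y₂ ≤ 1) :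
    psi d k y₂ < psi d k y₁ := by
  unfold psi
  apply mul_lt_mul_of_pos_left _ (c_pos hd)
  apply Finset.sum_lt_sum_of_nonempty
  · rw [Finset.nonempty_range_iff]; omega
  · intro j hj
    exact term_anti hk hd hα hK ha1 h12 h2 (Finset.mem_range.mp hj)


lemma one_lt_psi_alpha (hk : 2 < k) (hd : 2 ≤ d) {α : ℝ} (hα0 : 0 < α)
    (hαfix : gd d k α = α) (hK : (k : ℝ) - 2 < ((d : ℝ) - 1) * α ^ (k - 1)) :
    1 < psi d k α := by
  have hsum : ∀ j ∈ Finset.range (k - 2),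
      gd d k α ^ (j + 1) * α ^ (k - 2 - j) = α ^ (k - 1) := by
    intro j hj; rw [Finset.mem_range] at hj
    rw [hαfix]; exact pow_split α (by omega)
  have hps : psi d k α = ((d : ℝ) - 1) * (((k : ℝ) - 2) * α ^ (k - 1)) := by
    rw [psi, Finset.sum_congr rfl hsum, Finset.sum_const, Finset.card_range,
      nsmul_eq_mul, Nat.cast_sub (by omega : 2 ≤ k)]
    norm_num
  rw [hps]
  have h2 : (1 : ℝ) ≤ (k : ℝ) - 2 := by
    have : (3 : ℝ) ≤ k := by exact_mod_cast hk
    linarith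
  have hX : 1 < ((d : ℝ) - 1) * α ^ (k - 1) := lt_of_le_of_lt h2 hK
  nlinarith

lemma psi_one_lt (hk : 2 < k) (hd : 2 ≤ d) : psi d k 1 < 1 := by
  have hd0 : (0 : ℝ) < d := by
    have : (2 : ℝ) ≤ d := by exact_mod_cast hd
    linarith
  have hg1 : gd d k 1 = 1 / (d : ℝ) := by
    rw [gd, one_pow, mul_one]; congr 1; ring
  have hterm : ∀ j ∈ Finset.range (k - 2),
      ((d : ℝ) - 1) * (gd d k 1 ^ (j + 1) * (1 : ℝ) ^ (k - 2 - j))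
      = (1 / (d : ℝ)) ^ j - (1 / (d : ℝ)) ^ (j + 1) := by
    intro j _
    rw [hg1, one_pow, mul_one, pow_succ]
    field_simp
  have hps : psi d k 1 = 1 - (1 / (d : ℝ)) ^ (k - 2) := by
    rw [psi, Finset.mul_sum, Finset.sum_congr rfl hterm,
      Finset.sum_range_sub' (fun j => (1 / (d : ℝ)) ^ j), pow_zero]
  rw [hps]
  have : (0 : ℝ) < (1 / (d : ℝ)) ^ (k - 2) := pow_pos (by positivity) _
  linarith

lemma hK_of_large (hk : 2 < k) (hd : (k - 1) ^ k + 2 ≤ d) {α : ℝ} (hα0 : 0 < α)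
    (hα1 : α < 1) (Eα : α * (1 + ((d : ℝ) - 1) * α ^ (k - 1)) = 1) :
    (k : ℝ) - 2 < ((d : ℝ) - 1) * α ^ (k - 1) := by
  have hc : ((k : ℝ) - 1) ^ k + 1 ≤ (d : ℝ) - 1 := by
    have h1 : (((k - 1) ^ k + 2 : ℕ) : ℝ) ≤ (d : ℝ) := by exact_mod_cast hd
    push_cast [Nat.cast_sub (by omega : 1 ≤ k)] at h1
    linarith
  have hpow : α ^ 1 * α ^ (k - 1) = α ^ k := pow_split α (by omega)
  rw [pow_one] at hpow
  have E2 : α + ((d : ℝ) - 1) * α ^ k = 1 := by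
    linear_combination Eα - ((d : ℝ) - 1) * hpow
  have hkα : α * ((k : ℝ) - 1) < 1 := by
    by_contra h
    push_neg at h
    have hkpos : (0 : ℝ) ≤ α * ((k : ℝ) - 1) := le_trans zero_le_one h
    have h1 : (1 : ℝ) ≤ (α * ((k : ℝ) - 1)) ^ k := by
      calc (1 : ℝ) = 1 ^ k := (one_pow k).symm
        _ ≤ (α * ((k : ℝ) - 1)) ^ k := pow_le_pow_left₀ (by norm_num) h k
    rw [mul_pow] at h1
    have hαk : 0 < α ^ k := pow_pos hα0 k
    have h3 : ((d : ℝ) - 1) * α ^ k < 1 := by linarith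
    have h4 : ((k : ℝ) - 1) ^ k * α ^ k ≤ (((d : ℝ) - 1) - 1) * α ^ k :=
      mul_le_mul_of_nonneg_right (by linarith) hαk.le
    nlinarith
  have hinv : ((k : ℝ) - 1) < 1 / α := by
    rw [lt_div_iff₀ hα0]
    linarith [hkα]
  have hinv2 : 1 + ((d : ℝ) - 1) * α ^ (k - 1) = 1 / α := by
    rw [eq_div_iff hα0.ne']
    linarith [Eα]
  linarith

lemma psi_contOn (hd : 2 ≤ d) {α : ℝ} (hα : 0 < α) :
    ContinuousOn (psi d k) (Icc α 1) := by
  have hg : ContinuousOn (gd d k) (Icc α 1) := by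
    apply ContinuousOn.div continuousOn_const
    · exact (continuous_const.add (continuous_const.mul (continuous_pow _))).continuousOn
    · intro y hy
      exact (denom_pos hd (le_trans hα.le hy.1)).ne'
  apply ContinuousOn.mul continuousOn_const
  apply continuousOn_finset_sum
  intro j _
  exact (hg.pow _).mul (continuous_pow _).continuousOn

end ThreeSol

open ThreeSol in
/-- For fixed `k > 2` and all sufficiently large `d`: `x = f_d(x)` has exactly three
solutions `0 < γ < α < β < 1` in `[0,1]`, where `α` is the fixed point of `g_d` in
`(0,1)`; moreover `γ = g_d(β)`. -/
theorem fd_three_solutions (k : ℕ) (hk : 2 < k) :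
    ∃ d₀ : ℕ, ∀ d : ℕ, d₀ ≤ d →
      ∀ α : ℝ, α ∈ Set.Ioo (0 : ℝ) 1 → gd d k α = α →
        ∃ γ β : ℝ, 0 < γ ∧ γ < α ∧ α < β ∧ β < 1 ∧
          fd d k γ = γ ∧ fd d k α = α ∧ fd d k β = β ∧ γ = gd d k β ∧
          ∀ x ∈ Set.Icc (0 : ℝ) 1, fd d k x = x → x = γ ∨ x = α ∨ x = β := by
  refine ⟨(k - 1) ^ k + 2, ?_⟩
  intro d hd α hα01 hαfix
  obtain ⟨hα0, hα1⟩ := hα01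
  have hd2 : 2 ≤ d := le_trans (Nat.le_add_left 2 _) hd
  have Eα : α * (1 + ((d : ℝ) - 1) * α ^ (k - 1)) = 1 := (gd_eq_iff hd2 hα0.le).mp hαfix
  have hK := hK_of_large hk hd hα0 hα1 Eα
  have hψα := one_lt_psi_alpha hk hd2 hα0 hαfix hK
  have hψ1 := psi_one_lt (d := d) hk hd2
  have hsub := intermediate_value_Icc' hα1.le (psi_contOn (k := k) hd2 hα0)
  have h1mem : (1 : ℝ) ∈ Set.Icc (psi d k 1) (psi d k α) := ⟨hψ1.le, hψα.le⟩
  obtain ⟨β, hβmem, hβψ⟩ := hsub h1mem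
  obtain ⟨hαβ, hβ1⟩ := hβmem
  have hβα : α < β := lt_of_le_of_ne hαβ (fun h => by rw [← h] at hβψ; linarith)
  have hβlt1 : β < 1 := lt_of_le_of_ne hβ1 (fun h => by rw [h] at hβψ; linarith)
  have hβ0 : 0 < β := hα0.trans hβα
  set γ := gd d k β with hγdef
  have hγ0 : 0 < γ := gd_pos hd2 hβ0.le
  have hγα : γ < α := by
    have := gd_anti hk hd2 hα0.le hβα
    rwa [hαfix] at this
  have hγβ : γ < β := hγα.trans hβα
  have hgγ : gd d k γ = β := (cycle_iff hk hd2 hγ0 hγβ hγdef.symm).mpr hβψ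
  have hβfix : fd d k β = β := by rw [fd, ← hγdef, hgγ]
  have hγfix : fd d k γ = γ := by rw [fd, hgγ, ← hγdef]
  have hαfd : fd d k α = α := by rw [fd, hαfix, hαfix]
  refine ⟨γ, β, hγ0, hγα, hβα, hβlt1, hγfix, hαfd, hβfix, hγdef, ?_⟩
  have keyGT : ∀ z : ℝ, α < z → z < 1 → fd d k z = z → z = β := by
    intro z hz hz1 hzfd
    have hz0 : 0 < z := hα0.trans hz
    have hu0 : 0 < gd d k z := gd_pos hd2 hz0.le
    have huα : gd d k z < α := by
      have := gd_anti hk hd2 hα0.le hz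
      rwa [hαfix] at this
    have huz : gd d k z < z := huα.trans hz
    have hgu : gd d k (gd d k z) = z := hzfd
    have hψz : psi d k z = 1 := (cycle_iff hk hd2 hu0 huz rfl).mp hgu
    rcases lt_trichotomy z β with h | h | h
    · exfalso
      have := psi_anti hk hd2 hα0 hK hz.le h hβ1
      rw [hψz, hβψ] at this
      exact lt_irrefl _ this
    · exact h
    · exfalso
      have := psi_anti hk hd2 hα0 hK hαβ h hz1.le
      rw [hψz, hβψ] at this
      exact lt_irrefl _ this
  intro x hx hxfd
  have hx0 : x ≠ 0 := by
    intro h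
    rw [h] at hxfd
    have hg0 : gd d k 0 = 1 := by
      rw [gd, zero_pow (by omega : k - 1 ≠ 0), mul_zero]
      norm_num
    have heq : fd d k 0 = gd d k 1 := by rw [fd, hg0]
    have hpos : 0 < gd d k 1 := gd_pos hd2 (by norm_num)
    rw [heq] at hxfd
    linarith
  have hx1 : x ≠ 1 := by
    intro h
    rw [h] at hxfd
    have hglt : gd d k (gd d k 1) < 1 := gd_lt_one hk hd2 (gd_pos hd2 (by norm_num))
    rw [show fd d k 1 = gd d k (gd d k 1) from rfl] at hxfd
    linarith
  have hx0' : 0 < x := lt_of_le_of_ne hx.1 (Ne.symm hx0)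
  have hx1' : x < 1 := lt_of_le_of_ne hx.2 hx1
  rcases lt_trichotomy x α with h | h | h
  · left
    have hvα : α < gd d k x := by
      have := gd_anti hk hd2 hx0'.le h
      rwa [hαfix] at this
    have hv1 : gd d k x < 1 := gd_lt_one hk hd2 hx0'
    have hfd' : gd d k (gd d k x) = x := hxfd
    have hvfd : fd d k (gd d k x) = gd d k x := by
      rw [fd, hfd']
    have hvβ : gd d k x = β := keyGT _ hvα hv1 hvfd
    rw [hvβ] at hfd'
    rw [← hfd']
  · right; left; exact h
  · right; right; exact keyGT x h hx1' hxfd
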